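/- Cascade lemma: Let M₁ be uniform on [1:2ⁿ], let (E₁,D₁) and (E₂,D₂) be ciphers with independent keys K₁, K₂ (also independent of M₁), set M₂ = E₁(K₁,M₁) and C = E₂(K₂,M₂). Then ρ_m(M₁; C) ≤ ρ_m(M₁; M₂) · ρ_m(M₂; C). -/

import Mathlib

open BigOperators Finset
open scoped Classical

/-- Hirschfeld–Gebelein–Rényi maximal correlation of a joint pmf `p` on `X × Y`:
the supremum of `E[f(X) g(Y)]` over zero-mean, unit-second-moment `f`, `g`
(`sSup ∅ = 0` if no such functions exist). -/
noncomputable def maxCorr {X Y : Type*} [Fintype X] [Fintype Y] (p : X → Y → ℝ) : ℝ :=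
  sSup {r : ℝ | ∃ f : X → ℝ, ∃ g : Y → ℝ,
    (∑ x, ∑ y, p x y * f x) = 0 ∧
    (∑ x, ∑ y, p x y * g y) = 0 ∧
    (∑ x, ∑ y, p x y * (f x) ^ 2) = 1 ∧
    (∑ x, ∑ y, p x y * (g y) ^ 2) = 1 ∧
    r = ∑ x, ∑ y, p x y * f x * g y}

/-- Spectral (operator) norm of a real matrix. -/
noncomputable def specNorm {X Y : Type*} [Fintype X] [Fintype Y] (B : Matrix X Y ℝ) : ℝ :=
  sSup {r : ℝ | ∃ v : Y → ℝ, (∑ y, (v y) ^ 2) = 1 ∧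
    r = Real.sqrt (∑ x, (B.mulVec v x) ^ 2)}

/-- The set of correlation values in `maxCorr`. -/
def corrSet {X Y : Type*} [Fintype X] [Fintype Y] (p : X → Y → ℝ) : Set ℝ :=
  {r : ℝ | ∃ f : X → ℝ, ∃ g : Y → ℝ,
    (∑ x, ∑ y, p x y * f x) = 0 ∧
    (∑ x, ∑ y, p x y * g y) = 0 ∧
    (∑ x, ∑ y, p x y * (f x) ^ 2) = 1 ∧
    (∑ x, ∑ y, p x y * (g y) ^ 2) = 1 ∧
    r = ∑ x, ∑ y, p x y * f x * g y}

lemma maxCorr_eq_sSup {X Y : Type*} [Fintype X] [Fintype Y] (p : X → Y → ℝ) :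
    maxCorr p = sSup (corrSet p) := rfl

lemma corrSet_le_one {X Y : Type*} [Fintype X] [Fintype Y] {p : X → Y → ℝ}
    (hp : ∀ x y, 0 ≤ p x y) {r : ℝ} (hr : r ∈ corrSet p) : r ≤ 1 := by
  obtain ⟨f, g, hf0, hg0, hf2, hg2, hrfg⟩ := hr
  have key := Finset.sum_mul_sq_le_sq_mul_sq Finset.univ
    (fun xy : X × Y => Real.sqrt (p xy.1 xy.2) * f xy.1)
    (fun xy : X × Y => Real.sqrt (p xy.1 xy.2) * g xy.2)
  have e1 : ∑ xy : X × Y, (Real.sqrt (p xy.1 xy.2) * f xy.1) * (Real.sqrt (p xy.1 xy.2) * g xy.2)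
      = ∑ x, ∑ y, p x y * f x * g y := by
    rw [Fintype.sum_prod_type]
    refine Finset.sum_congr rfl fun x _ => Finset.sum_congr rfl fun y _ => ?_
    have h := Real.mul_self_sqrt (hp x y)
    rw [mul_mul_mul_comm, h, ← mul_assoc]
  have e2 : ∑ xy : X × Y, (Real.sqrt (p xy.1 xy.2) * f xy.1) ^ 2
      = ∑ x, ∑ y, p x y * (f x) ^ 2 := by
    rw [Fintype.sum_prod_type]
    refine Finset.sum_congr rfl fun x _ => Finset.sum_congr rfl fun y _ => ?_
    rw [mul_pow, Real.sq_sqrt (hp x y)]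
  have e3 : ∑ xy : X × Y, (Real.sqrt (p xy.1 xy.2) * g xy.2) ^ 2
      = ∑ x, ∑ y, p x y * (g y) ^ 2 := by
    rw [Fintype.sum_prod_type]
    refine Finset.sum_congr rfl fun x _ => Finset.sum_congr rfl fun y _ => ?_
    rw [mul_pow, Real.sq_sqrt (hp x y)]
  rw [e1, e2, e3, hf2, hg2] at key
  nlinarith [key, hrfg]

lemma corrSet_bddAbove {X Y : Type*} [Fintype X] [Fintype Y] {p : X → Y → ℝ}
    (hp : ∀ x y, 0 ≤ p x y) : BddAbove (corrSet p) :=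
  ⟨1, fun _ hr => corrSet_le_one hp hr⟩

lemma maxCorr_nonneg {X Y : Type*} [Fintype X] [Fintype Y] {p : X → Y → ℝ}
    (hp : ∀ x y, 0 ≤ p x y) : 0 ≤ maxCorr p := by
  rw [maxCorr_eq_sSup]
  rcases Set.eq_empty_or_nonempty (corrSet p) with h | ⟨r, hr⟩
  · rw [h, Real.sSup_empty]
  · obtain ⟨f, g, hf0, hg0, hf2, hg2, hrfg⟩ := hr
    have hr' : (-r) ∈ corrSet p := by
      refine ⟨f, fun y => -g y, hf0, ?_, hf2, ?_, ?_⟩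
      · simpa [mul_neg, Finset.sum_neg_distrib] using congrArg Neg.neg hg0
      · simpa using hg2
      · rw [hrfg]; simp [mul_neg, Finset.sum_neg_distrib]
    have h1 : r ≤ sSup (corrSet p) := le_csSup (corrSet_bddAbove hp) ⟨f, g, hf0, hg0, hf2, hg2, hrfg⟩
    have h2 : -r ≤ sSup (corrSet p) := le_csSup (corrSet_bddAbove hp) hr'
    linarith

/-- If both marginals of `p` are uniform (with the same value `(card X)⁻¹`), then for
zero-sum `u, v` the correlation sum is bounded by `maxCorr`. -/
lemma corr_pair_le {X Y : Type*} [Fintype X] [Fintype Y] (p : X → Y → ℝ)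
    (hp : ∀ x y, 0 ≤ p x y)
    (hX : ∀ x, ∑ y, p x y = ((Fintype.card X : ℝ))⁻¹)
    (hY : ∀ y, ∑ x, p x y = ((Fintype.card X : ℝ))⁻¹)
    (u : X → ℝ) (v : Y → ℝ) (hu : ∑ x, u x = 0) (hv : ∑ y, v y = 0) :
    ∑ x, ∑ y, p x y * u x * v y ≤
      maxCorr p * (((Fintype.card X : ℝ))⁻¹ *
        (Real.sqrt (∑ x, (u x) ^ 2) * Real.sqrt (∑ y, (v y) ^ 2))) := by
  set N : ℝ := (Fintype.card X : ℝ) with hN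
  by_cases hu2 : (∑ x, (u x) ^ 2) = 0
  · have hu0 : ∀ x, u x = 0 := by
      intro x
      have := (Finset.sum_eq_zero_iff_of_nonneg (fun i _ => sq_nonneg (u i))).mp hu2 x (mem_univ x)
      exact pow_eq_zero_iff (two_ne_zero) |>.mp this
    have : ∑ x, ∑ y, p x y * u x * v y = 0 := by
      refine Finset.sum_eq_zero fun x _ => Finset.sum_eq_zero fun y _ => by rw [hu0 x]; ring
    rw [this, hu2, Real.sqrt_zero]
    have := maxCorr_nonneg hp
    have hNnn : (0:ℝ) ≤ N⁻¹ := by positivity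
    nlinarith [Real.sqrt_nonneg (∑ y, (v y) ^ 2)]
  · by_cases hv2 : (∑ y, (v y) ^ 2) = 0
    · have hv0 : ∀ y, v y = 0 := by
        intro y
        have := (Finset.sum_eq_zero_iff_of_nonneg (fun i _ => sq_nonneg (v i))).mp hv2 y (mem_univ y)
        exact pow_eq_zero_iff (two_ne_zero) |>.mp this
      have : ∑ x, ∑ y, p x y * u x * v y = 0 := by
        refine Finset.sum_eq_zero fun x _ => Finset.sum_eq_zero fun y _ => by rw [hv0 y]; ring
      rw [this, hv2, Real.sqrt_zero]
      have := maxCorr_nonneg hp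
      have hNnn : (0:ℝ) ≤ N⁻¹ := by positivity
      nlinarith [Real.sqrt_nonneg (∑ x, (u x) ^ 2)]
    · -- main case
      have hupos : 0 < ∑ x, (u x) ^ 2 :=
        lt_of_le_of_ne (Finset.sum_nonneg fun i _ => sq_nonneg _) (Ne.symm hu2)
      have hvpos : 0 < ∑ y, (v y) ^ 2 :=
        lt_of_le_of_ne (Finset.sum_nonneg fun i _ => sq_nonneg _) (Ne.symm hv2)
      have hXne : Nonempty X := by
        by_contra h
        rw [not_nonempty_iff] at h
        rw [Finset.univ_eq_empty, Finset.sum_empty] at hupos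
        exact lt_irrefl _ hupos
      have hNpos : (0:ℝ) < N := by
        rw [hN]; exact_mod_cast Fintype.card_pos
      set U : ℝ := Real.sqrt (∑ x, (u x) ^ 2) with hU
      set V : ℝ := Real.sqrt (∑ y, (v y) ^ 2) with hV
      have hUpos : 0 < U := Real.sqrt_pos.mpr hupos
      have hVpos : 0 < V := Real.sqrt_pos.mpr hvpos
      have hUsq : U ^ 2 = ∑ x, (u x) ^ 2 := Real.sq_sqrt hupos.le
      have hVsq : V ^ 2 = ∑ y, (v y) ^ 2 := Real.sq_sqrt hvpos.le
      set a : ℝ := Real.sqrt N / U with ha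
      set b : ℝ := Real.sqrt N / V with hb
      have hsqN : Real.sqrt N ^ 2 = N := Real.sq_sqrt hNpos.le
      have hapos : 0 < a := div_pos (Real.sqrt_pos.mpr hNpos) hUpos
      have hbpos : 0 < b := div_pos (Real.sqrt_pos.mpr hNpos) hVpos
      have hasq : a ^ 2 * (N⁻¹ * (∑ x, (u x) ^ 2)) = 1 := by
        rw [ha, div_pow, hsqN, ← hUsq]
        field_simp
      have hbsq : b ^ 2 * (N⁻¹ * (∑ y, (v y) ^ 2)) = 1 := by
        rw [hb, div_pow, hsqN, ← hVsq]
        field_simp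
      have hmem : (∑ x, ∑ y, p x y * (a * u x) * (b * v y)) ∈ corrSet p := by
        refine ⟨fun x => a * u x, fun y => b * v y, ?_, ?_, ?_, ?_, rfl⟩
        · have e1 : ∑ x, ∑ y, p x y * (a * u x) = ∑ x, a * (N⁻¹ * u x) :=
            Finset.sum_congr rfl fun x _ => by rw [← Finset.sum_mul, hX x, hN]; ring
          rw [e1, ← Finset.mul_sum, ← Finset.mul_sum, hu]; ring
        · have e1 : ∑ x, ∑ y, p x y * (b * v y) = ∑ y, b * (N⁻¹ * v y) := by
            rw [Finset.sum_comm]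
            exact Finset.sum_congr rfl fun y _ => by rw [← Finset.sum_mul, hY y, hN]; ring
          rw [e1, ← Finset.mul_sum, ← Finset.mul_sum, hv]; ring
        · have e1 : ∑ x, ∑ y, p x y * (a * u x) ^ 2 = ∑ x, a ^ 2 * (N⁻¹ * (u x) ^ 2) :=
            Finset.sum_congr rfl fun x _ => by rw [← Finset.sum_mul, hX x, hN]; ring
          rw [e1, ← Finset.mul_sum, ← Finset.mul_sum]
          exact hasq
        · have e1 : ∑ x, ∑ y, p x y * (b * v y) ^ 2 = ∑ y, b ^ 2 * (N⁻¹ * (v y) ^ 2) := by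
            rw [Finset.sum_comm]
            exact Finset.sum_congr rfl fun y _ => by rw [← Finset.sum_mul, hY y, hN]; ring
          rw [e1, ← Finset.mul_sum, ← Finset.mul_sum]
          exact hbsq
      have hle : (∑ x, ∑ y, p x y * (a * u x) * (b * v y)) ≤ maxCorr p := by
        rw [maxCorr_eq_sSup]
        exact le_csSup (corrSet_bddAbove hp) hmem
      have hexp : (∑ x, ∑ y, p x y * (a * u x) * (b * v y))
          = a * b * ∑ x, ∑ y, p x y * u x * v y := by
        rw [Finset.mul_sum]
        refine Finset.sum_congr rfl fun x _ => ?_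
        rw [Finset.mul_sum]
        exact Finset.sum_congr rfl fun y _ => by ring
      rw [hexp] at hle
      have hab : a * b = N / (U * V) := by
        rw [ha, hb, div_mul_div_comm, Real.mul_self_sqrt hNpos.le]
      rw [hab] at hle
      have hUV : 0 < U * V := mul_pos hUpos hVpos
      have h2 := mul_le_mul_of_nonneg_right hle (le_of_lt (by positivity : (0:ℝ) < U * V / N))
      have h3 : N / (U * V) * (∑ x, ∑ y, p x y * u x * v y) * (U * V / N)
          = ∑ x, ∑ y, p x y * u x * v y := by
        field_simp
      rw [h3] at h2
      calc ∑ x, ∑ y, p x y * u x * v y ≤ maxCorr p * (U * V / N) := h2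
        _ = maxCorr p * (N⁻¹ * (U * V)) := by ring

lemma sum_ind_mul {κ α : Type*} [Fintype κ] [Fintype α] [DecidableEq α] (F : κ → α) (w : α → ℝ) :
    ∑ b, (∑ k, if F k = b then (1:ℝ) else 0) * w b = ∑ k, w (F k) := by
  simp_rw [Finset.sum_mul]
  rw [Finset.sum_comm]
  refine Finset.sum_congr rfl fun k _ => ?_
  simp [ite_mul, Finset.sum_ite_eq]

lemma sum_ind_bij {α β : Type*} [Fintype α] [Fintype β] [DecidableEq β] {F : α → β}
    (hF : Function.Bijective F) (c : β) :
    ∑ m, (if F m = c then (1:ℝ) else 0) = 1 := by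
  rw [Fintype.sum_bijective F hF _ (fun b => if b = c then (1:ℝ) else 0) (fun m => rfl)]
  simp

lemma sum_ind_diag {α : Type*} [Fintype α] [DecidableEq α] (F : α) :
    ∑ c, (if F = c then (1:ℝ) else 0) = 1 := by
  simp

lemma card_filter_real {κ : Type*} [Fintype κ] (P : κ → Prop) [DecidablePred P] :
    ((univ.filter P).card : ℝ) = ∑ k, if P k then (1:ℝ) else 0 := by
  rw [Finset.card_filter]
  push_cast
  exact Finset.sum_congr rfl fun k _ => by split <;> simp

set_option maxHeartbeats 1000000 in
theorem stmt8 (n : ℕ) {K1 K2 : Type*} [Fintype K1] [Fintype K2] [Nonempty K1] [Nonempty K2]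
    (E1 : K1 → Fin (2 ^ n) → Fin (2 ^ n)) (D1 : K1 → Fin (2 ^ n) → Fin (2 ^ n))
    (hD1 : ∀ k m, D1 k (E1 k m) = m)
    (E2 : K2 → Fin (2 ^ n) → Fin (2 ^ n)) (D2 : K2 → Fin (2 ^ n) → Fin (2 ^ n))
    (hD2 : ∀ k m, D2 k (E2 k m) = m) :
    maxCorr (fun (m c : Fin (2 ^ n)) =>
        ((2 ^ n : ℝ))⁻¹ * ((Fintype.card K1 : ℝ))⁻¹ * ((Fintype.card K2 : ℝ))⁻¹ *
          ((univ.filter fun kk : K1 × K2 => E2 kk.2 (E1 kk.1 m) = c).card : ℝ)) ≤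
    maxCorr (fun (m c : Fin (2 ^ n)) =>
        ((2 ^ n : ℝ))⁻¹ * ((Fintype.card K1 : ℝ))⁻¹ *
          ((univ.filter fun k => E1 k m = c).card : ℝ)) *
    maxCorr (fun (m c : Fin (2 ^ n)) =>
        ((2 ^ n : ℝ))⁻¹ * ((Fintype.card K2 : ℝ))⁻¹ *
          ((univ.filter fun k => E2 k m = c).card : ℝ)) := by
  classical
  set N : ℝ := ((2:ℝ) ^ n) with hNdef
  set cK1 : ℝ := (Fintype.card K1 : ℝ) with hcK1
  set cK2 : ℝ := (Fintype.card K2 : ℝ) with hcK2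
  have hNpos : (0:ℝ) < N := by positivity
  have hK1pos : (0:ℝ) < cK1 := by rw [hcK1]; exact_mod_cast Fintype.card_pos
  have hK2pos : (0:ℝ) < cK2 := by rw [hcK2]; exact_mod_cast Fintype.card_pos
  have hcardFin : ((Fintype.card (Fin (2 ^ n)) : ℝ)) = N := by
    rw [Fintype.card_fin, hNdef]; push_cast; ring
  have hb1 : ∀ k, Function.Bijective (E1 k) := fun k =>
    Finite.injective_iff_bijective.mp fun a b hab => by
      have := congrArg (D1 k) hab; simpa [hD1] using this
  have hb2 : ∀ k, Function.Bijective (E2 k) := fun k =>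
    Finite.injective_iff_bijective.mp fun a b hab => by
      have := congrArg (D2 k) hab; simpa [hD2] using this
  have hb12 : ∀ (kk : K1 × K2), Function.Bijective (fun m => E2 kk.2 (E1 kk.1 m)) :=
    fun kk => (hb2 kk.2).comp (hb1 kk.1)
  set P : Fin (2 ^ n) → Fin (2 ^ n) → ℝ := fun m c =>
    N⁻¹ * cK1⁻¹ * cK2⁻¹ *
      ((univ.filter fun kk : K1 × K2 => E2 kk.2 (E1 kk.1 m) = c).card : ℝ) with hP
  set P1 : Fin (2 ^ n) → Fin (2 ^ n) → ℝ := fun m c =>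
    N⁻¹ * cK1⁻¹ * ((univ.filter fun k => E1 k m = c).card : ℝ) with hP1
  set P2 : Fin (2 ^ n) → Fin (2 ^ n) → ℝ := fun m c =>
    N⁻¹ * cK2⁻¹ * ((univ.filter fun k => E2 k m = c).card : ℝ) with hP2
  show maxCorr P ≤ maxCorr P1 * maxCorr P2
  have hPval : ∀ m c, P m c = N⁻¹ * cK1⁻¹ * cK2⁻¹ *
      ∑ kk : K1 × K2, (if E2 kk.2 (E1 kk.1 m) = c then (1:ℝ) else 0) := by
    intro m c
    simp only [hP]
    rw [card_filter_real]
  have hP1val : ∀ m c, P1 m c = N⁻¹ * cK1⁻¹ *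
      ∑ k : K1, (if E1 k m = c then (1:ℝ) else 0) := by
    intro m c
    simp only [hP1]
    rw [card_filter_real]
  have hP2val : ∀ m c, P2 m c = N⁻¹ * cK2⁻¹ *
      ∑ k : K2, (if E2 k m = c then (1:ℝ) else 0) := by
    intro m c
    simp only [hP2]
    rw [card_filter_real]
  have hPnn : ∀ m c, 0 ≤ P m c := fun m c => by
    simp only [hP]; positivity
  have hP1nn : ∀ m c, 0 ≤ P1 m c := fun m c => by
    simp only [hP1]; positivity
  have hP2nn : ∀ m c, 0 ≤ P2 m c := fun m c => by
    simp only [hP2]; positivity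
  -- marginals
  have hProw : ∀ m, ∑ c, P m c = N⁻¹ := by
    intro m
    calc ∑ c, P m c
        = ∑ c, ∑ kk : K1 × K2,
            N⁻¹ * cK1⁻¹ * cK2⁻¹ * (if E2 kk.2 (E1 kk.1 m) = c then (1:ℝ) else 0) :=
          Finset.sum_congr rfl fun c _ => by rw [hPval m c, Finset.mul_sum]
      _ = ∑ kk : K1 × K2, ∑ c,
            N⁻¹ * cK1⁻¹ * cK2⁻¹ * (if E2 kk.2 (E1 kk.1 m) = c then (1:ℝ) else 0) :=
          Finset.sum_comm
      _ = ∑ _kk : K1 × K2, N⁻¹ * cK1⁻¹ * cK2⁻¹ :=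
          Finset.sum_congr rfl fun kk _ => by
            rw [← Finset.mul_sum, sum_ind_diag, mul_one]
      _ = N⁻¹ := by
          rw [Finset.sum_const]
          simp only [Finset.card_univ, Fintype.card_prod, nsmul_eq_mul]
          push_cast
          rw [← hcK1, ← hcK2]
          field_simp
  have hPcol : ∀ c, ∑ m, P m c = N⁻¹ := by
    intro c
    calc ∑ m, P m c
        = ∑ m, ∑ kk : K1 × K2,
            N⁻¹ * cK1⁻¹ * cK2⁻¹ * (if E2 kk.2 (E1 kk.1 m) = c then (1:ℝ) else 0) :=
          Finset.sum_congr rfl fun m _ => by rw [hPval m c, Finset.mul_sum]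
      _ = ∑ kk : K1 × K2, ∑ m,
            N⁻¹ * cK1⁻¹ * cK2⁻¹ * (if E2 kk.2 (E1 kk.1 m) = c then (1:ℝ) else 0) :=
          Finset.sum_comm
      _ = ∑ _kk : K1 × K2, N⁻¹ * cK1⁻¹ * cK2⁻¹ :=
          Finset.sum_congr rfl fun kk _ => by
            rw [← Finset.mul_sum, sum_ind_bij (hb12 kk) c, mul_one]
      _ = N⁻¹ := by
          rw [Finset.sum_const]
          simp only [Finset.card_univ, Fintype.card_prod, nsmul_eq_mul]
          push_cast
          rw [← hcK1, ← hcK2]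
          field_simp
  have hP1row : ∀ m, ∑ c, P1 m c = N⁻¹ := by
    intro m
    calc ∑ c, P1 m c
        = ∑ c, ∑ k : K1, N⁻¹ * cK1⁻¹ * (if E1 k m = c then (1:ℝ) else 0) :=
          Finset.sum_congr rfl fun c _ => by rw [hP1val m c, Finset.mul_sum]
      _ = ∑ k : K1, ∑ c, N⁻¹ * cK1⁻¹ * (if E1 k m = c then (1:ℝ) else 0) :=
          Finset.sum_comm
      _ = ∑ _k : K1, N⁻¹ * cK1⁻¹ :=
          Finset.sum_congr rfl fun k _ => by
            rw [← Finset.mul_sum, sum_ind_diag, mul_one]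
      _ = N⁻¹ := by
          rw [Finset.sum_const]
          simp only [Finset.card_univ, nsmul_eq_mul]
          rw [← hcK1]
          field_simp
  have hP1col : ∀ c, ∑ m, P1 m c = N⁻¹ := by
    intro c
    calc ∑ m, P1 m c
        = ∑ m, ∑ k : K1, N⁻¹ * cK1⁻¹ * (if E1 k m = c then (1:ℝ) else 0) :=
          Finset.sum_congr rfl fun m _ => by rw [hP1val m c, Finset.mul_sum]
      _ = ∑ k : K1, ∑ m, N⁻¹ * cK1⁻¹ * (if E1 k m = c then (1:ℝ) else 0) :=
          Finset.sum_comm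
      _ = ∑ _k : K1, N⁻¹ * cK1⁻¹ :=
          Finset.sum_congr rfl fun k _ => by
            rw [← Finset.mul_sum, sum_ind_bij (hb1 k) c, mul_one]
      _ = N⁻¹ := by
          rw [Finset.sum_const]
          simp only [Finset.card_univ, nsmul_eq_mul]
          rw [← hcK1]
          field_simp
  have hP2row : ∀ m, ∑ c, P2 m c = N⁻¹ := by
    intro m
    calc ∑ c, P2 m c
        = ∑ c, ∑ k : K2, N⁻¹ * cK2⁻¹ * (if E2 k m = c then (1:ℝ) else 0) :=
          Finset.sum_congr rfl fun c _ => by rw [hP2val m c, Finset.mul_sum]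
      _ = ∑ k : K2, ∑ c, N⁻¹ * cK2⁻¹ * (if E2 k m = c then (1:ℝ) else 0) :=
          Finset.sum_comm
      _ = ∑ _k : K2, N⁻¹ * cK2⁻¹ :=
          Finset.sum_congr rfl fun k _ => by
            rw [← Finset.mul_sum, sum_ind_diag, mul_one]
      _ = N⁻¹ := by
          rw [Finset.sum_const]
          simp only [Finset.card_univ, nsmul_eq_mul]
          rw [← hcK2]
          field_simp
  have hP2col : ∀ c, ∑ m, P2 m c = N⁻¹ := by
    intro c
    calc ∑ m, P2 m c
        = ∑ m, ∑ k : K2, N⁻¹ * cK2⁻¹ * (if E2 k m = c then (1:ℝ) else 0) :=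
          Finset.sum_congr rfl fun m _ => by rw [hP2val m c, Finset.mul_sum]
      _ = ∑ k : K2, ∑ m, N⁻¹ * cK2⁻¹ * (if E2 k m = c then (1:ℝ) else 0) :=
          Finset.sum_comm
      _ = ∑ _k : K2, N⁻¹ * cK2⁻¹ :=
          Finset.sum_congr rfl fun k _ => by
            rw [← Finset.mul_sum, sum_ind_bij (hb2 k) c, mul_one]
      _ = N⁻¹ := by
          rw [Finset.sum_const]
          simp only [Finset.card_univ, nsmul_eq_mul]
          rw [← hcK2]
          field_simp
  have hP1row' : ∀ m, ∑ c, P1 m c = ((Fintype.card (Fin (2 ^ n)) : ℝ))⁻¹ := by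
    intro m; rw [hP1row m, hcardFin]
  have hP1col' : ∀ c, ∑ m, P1 m c = ((Fintype.card (Fin (2 ^ n)) : ℝ))⁻¹ := by
    intro c; rw [hP1col c, hcardFin]
  have hP2row' : ∀ m, ∑ c, P2 m c = ((Fintype.card (Fin (2 ^ n)) : ℝ))⁻¹ := by
    intro m; rw [hP2row m, hcardFin]
  have hP2col' : ∀ c, ∑ m, P2 m c = ((Fintype.card (Fin (2 ^ n)) : ℝ))⁻¹ := by
    intro c; rw [hP2col c, hcardFin]
  have hrho1 : 0 ≤ maxCorr P1 := maxCorr_nonneg hP1nn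
  have hrho2 : 0 ≤ maxCorr P2 := maxCorr_nonneg hP2nn
  rw [maxCorr_eq_sSup]
  refine Real.sSup_le ?_ (mul_nonneg hrho1 hrho2)
  rintro r ⟨f, g, hf0, hg0, hf2, hg2, hrfg⟩
  have hfsum : ∑ m, f m = 0 := by
    have e : ∑ m, ∑ c, P m c * f m = N⁻¹ * ∑ m, f m := by
      calc ∑ m, ∑ c, P m c * f m
          = ∑ m, N⁻¹ * f m := Finset.sum_congr rfl fun m _ => by
            rw [← Finset.sum_mul, hProw m]
        _ = N⁻¹ * ∑ m, f m := (Finset.mul_sum _ _ _).symm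
    rw [e] at hf0
    rcases mul_eq_zero.mp hf0 with h | h
    · exact absurd h (by positivity)
    · exact h
  have hgsum : ∑ c, g c = 0 := by
    have e : ∑ m, ∑ c, P m c * g c = N⁻¹ * ∑ c, g c := by
      calc ∑ m, ∑ c, P m c * g c
          = ∑ c, ∑ m, P m c * g c := Finset.sum_comm
        _ = ∑ c, N⁻¹ * g c := Finset.sum_congr rfl fun c _ => by
            rw [← Finset.sum_mul, hPcol c]
        _ = N⁻¹ * ∑ c, g c := (Finset.mul_sum _ _ _).symm
    rw [e] at hg0
    rcases mul_eq_zero.mp hg0 with h | h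
    · exact absurd h (by positivity)
    · exact h
  have hfsq : ∑ m, (f m) ^ 2 = N := by
    have e : ∑ m, ∑ c, P m c * (f m) ^ 2 = N⁻¹ * ∑ m, (f m) ^ 2 := by
      calc ∑ m, ∑ c, P m c * (f m) ^ 2
          = ∑ m, N⁻¹ * (f m) ^ 2 := Finset.sum_congr rfl fun m _ => by
            rw [← Finset.sum_mul, hProw m]
        _ = N⁻¹ * ∑ m, (f m) ^ 2 := (Finset.mul_sum _ _ _).symm
    rw [e] at hf2
    have := hNpos.ne'
    field_simp at hf2
    linarith
  have hgsq : ∑ c, (g c) ^ 2 = N := by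
    have e : ∑ m, ∑ c, P m c * (g c) ^ 2 = N⁻¹ * ∑ c, (g c) ^ 2 := by
      calc ∑ m, ∑ c, P m c * (g c) ^ 2
          = ∑ c, ∑ m, P m c * (g c) ^ 2 := Finset.sum_comm
        _ = ∑ c, N⁻¹ * (g c) ^ 2 := Finset.sum_congr rfl fun c _ => by
            rw [← Finset.sum_mul, hPcol c]
        _ = N⁻¹ * ∑ c, (g c) ^ 2 := (Finset.mul_sum _ _ _).symm
    rw [e] at hg2
    have := hNpos.ne'
    field_simp at hg2
    linarith
  -- the intermediate function h
  set h : Fin (2 ^ n) → ℝ := fun b => cK2⁻¹ * ∑ k : K2, g (E2 k b) with hh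
  have hhval : ∀ b, h b = cK2⁻¹ * ∑ k : K2, g (E2 k b) := fun b => rfl
  have hhsum : ∑ b, h b = 0 := by
    calc ∑ b, h b
        = ∑ b, ∑ k : K2, cK2⁻¹ * g (E2 k b) :=
          Finset.sum_congr rfl fun b _ => by rw [hhval b, Finset.mul_sum]
      _ = ∑ k : K2, ∑ b, cK2⁻¹ * g (E2 k b) := Finset.sum_comm
      _ = ∑ _k : K2, cK2⁻¹ * ∑ c, g c := Finset.sum_congr rfl fun k _ => by
            rw [← Finset.mul_sum,
              Fintype.sum_bijective (E2 k) (hb2 k) _ _ (fun b => rfl)]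
      _ = 0 := by rw [hgsum]; simp
  -- key identity
  have keyId : r = ∑ m, ∑ b, P1 m b * f m * h b := by
    have L : ∀ m, ∑ c, P m c * f m * g c
        = N⁻¹ * cK1⁻¹ * cK2⁻¹ * ∑ kk : K1 × K2, f m * g (E2 kk.2 (E1 kk.1 m)) := by
      intro m
      calc ∑ c, P m c * f m * g c
          = ∑ c, N⁻¹ * cK1⁻¹ * cK2⁻¹ *
              ((∑ kk : K1 × K2, if E2 kk.2 (E1 kk.1 m) = c then (1:ℝ) else 0)
                * (f m * g c)) :=
            Finset.sum_congr rfl fun c _ => by rw [hPval m c]; ring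
        _ = N⁻¹ * cK1⁻¹ * cK2⁻¹ * ∑ c,
              (∑ kk : K1 × K2, if E2 kk.2 (E1 kk.1 m) = c then (1:ℝ) else 0)
                * (f m * g c) := (Finset.mul_sum _ _ _).symm
        _ = N⁻¹ * cK1⁻¹ * cK2⁻¹ * ∑ kk : K1 × K2, f m * g (E2 kk.2 (E1 kk.1 m)) := by
            rw [sum_ind_mul (fun kk : K1 × K2 => E2 kk.2 (E1 kk.1 m)) (fun c => f m * g c)]
    have R : ∀ m, ∑ b, P1 m b * f m * h b
        = N⁻¹ * cK1⁻¹ * cK2⁻¹ * ∑ kk : K1 × K2, f m * g (E2 kk.2 (E1 kk.1 m)) := by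
      intro m
      calc ∑ b, P1 m b * f m * h b
          = ∑ b, N⁻¹ * cK1⁻¹ *
              ((∑ k : K1, if E1 k m = b then (1:ℝ) else 0) * (f m * h b)) :=
            Finset.sum_congr rfl fun b _ => by rw [hP1val m b]; ring
        _ = N⁻¹ * cK1⁻¹ * ∑ b,
              (∑ k : K1, if E1 k m = b then (1:ℝ) else 0) * (f m * h b) :=
            (Finset.mul_sum _ _ _).symm
        _ = N⁻¹ * cK1⁻¹ * ∑ k : K1, f m * h (E1 k m) := by
            rw [sum_ind_mul (fun k : K1 => E1 k m) (fun b => f m * h b)]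
        _ = N⁻¹ * cK1⁻¹ * ∑ k : K1, cK2⁻¹ * ∑ k2 : K2, f m * g (E2 k2 (E1 k m)) := by
            congr 1
            refine Finset.sum_congr rfl fun k _ => ?_
            rw [hhval (E1 k m), Finset.mul_sum, Finset.mul_sum]
            rw [Finset.mul_sum]
            exact Finset.sum_congr rfl fun k2 _ => by ring
        _ = N⁻¹ * cK1⁻¹ * cK2⁻¹ * ∑ kk : K1 × K2, f m * g (E2 kk.2 (E1 kk.1 m)) := by
            simp only [Fintype.sum_prod_type, Finset.mul_sum]
            exact Finset.sum_congr rfl fun k _ => Finset.sum_congr rfl fun k2 _ => by ring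
    rw [hrfg, Finset.sum_congr rfl fun m _ => L m, Finset.sum_congr rfl fun m _ => R m]
  -- step 1
  have step1 : r ≤ maxCorr P1 * (N⁻¹ *
      (Real.sqrt (∑ m, (f m) ^ 2) * Real.sqrt (∑ b, (h b) ^ 2))) := by
    rw [keyId]
    have := corr_pair_le P1 hP1nn hP1row' hP1col' f h hfsum hhsum
    rwa [hcardFin] at this
  -- step 2
  have key2 : ∑ b, (h b) ^ 2 = N * ∑ b, ∑ c, P2 b c * h b * g c := by
    have e : ∀ b, ∑ c, P2 b c * h b * g c = N⁻¹ * (h b) ^ 2 := by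
      intro b
      calc ∑ c, P2 b c * h b * g c
          = ∑ c, N⁻¹ * cK2⁻¹ *
              ((∑ k : K2, if E2 k b = c then (1:ℝ) else 0) * (h b * g c)) :=
            Finset.sum_congr rfl fun c _ => by rw [hP2val b c]; ring
        _ = N⁻¹ * cK2⁻¹ * ∑ c,
              (∑ k : K2, if E2 k b = c then (1:ℝ) else 0) * (h b * g c) :=
            (Finset.mul_sum _ _ _).symm
        _ = N⁻¹ * cK2⁻¹ * ∑ k : K2, h b * g (E2 k b) := by
            rw [sum_ind_mul (fun k : K2 => E2 k b) (fun c => h b * g c)]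
        _ = N⁻¹ * cK2⁻¹ * (h b * ∑ k : K2, g (E2 k b)) := by
            simp only [Finset.mul_sum]
        _ = N⁻¹ * (h b) ^ 2 := by
            have : h b * (cK2 * h b) = h b * ∑ k : K2, g (E2 k b) := by
              rw [hhval b]
              have hc2 : cK2 * (cK2⁻¹ * ∑ k : K2, g (E2 k b)) = ∑ k : K2, g (E2 k b) := by
                field_simp
              rw [hc2]
            rw [← this]
            field_simp
    calc ∑ b, (h b) ^ 2
        = ∑ b, N * (N⁻¹ * (h b) ^ 2) := Finset.sum_congr rfl fun b _ => by
          field_simp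
      _ = N * ∑ b, N⁻¹ * (h b) ^ 2 := (Finset.mul_sum _ _ _).symm
      _ = N * ∑ b, ∑ c, P2 b c * h b * g c := by
          rw [Finset.sum_congr rfl fun b _ => (e b).symm]
  have step2 : Real.sqrt (∑ b, (h b) ^ 2) ≤ maxCorr P2 * Real.sqrt (∑ c, (g c) ^ 2) := by
    have hcorr := corr_pair_le P2 hP2nn hP2row' hP2col' h g hhsum hgsum
    rw [hcardFin] at hcorr
    by_cases hz : (∑ b, (h b) ^ 2) = 0
    · rw [hz, Real.sqrt_zero]
      exact mul_nonneg hrho2 (Real.sqrt_nonneg _)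
    · have hpos : 0 < ∑ b, (h b) ^ 2 :=
        lt_of_le_of_ne (Finset.sum_nonneg fun i _ => sq_nonneg _) (Ne.symm hz)
      set s : ℝ := Real.sqrt (∑ b, (h b) ^ 2) with hs
      have hspos : 0 < s := Real.sqrt_pos.mpr hpos
      have hssq : s ^ 2 = ∑ b, (h b) ^ 2 := Real.sq_sqrt hpos.le
      have hbound : ∑ b, (h b) ^ 2 ≤ maxCorr P2 * s * Real.sqrt (∑ c, (g c) ^ 2) := by
        rw [key2]
        calc N * ∑ b, ∑ c, P2 b c * h b * g c
            ≤ N * (maxCorr P2 * (N⁻¹ * (s * Real.sqrt (∑ c, (g c) ^ 2)))) :=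
              mul_le_mul_of_nonneg_left hcorr hNpos.le
          _ = maxCorr P2 * s * Real.sqrt (∑ c, (g c) ^ 2) := by
              have hx : N * (maxCorr P2 * (N⁻¹ * (s * Real.sqrt (∑ c, (g c) ^ 2))))
                  = (N * N⁻¹) * (maxCorr P2 * s * Real.sqrt (∑ c, (g c) ^ 2)) := by ring
              rw [hx, mul_inv_cancel₀ hNpos.ne', one_mul]
      have h1 : s * s ≤ (maxCorr P2 * Real.sqrt (∑ c, (g c) ^ 2)) * s := by
        calc s * s = s ^ 2 := (sq s).symm
          _ = ∑ b, (h b) ^ 2 := hssq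
          _ ≤ maxCorr P2 * s * Real.sqrt (∑ c, (g c) ^ 2) := hbound
          _ = (maxCorr P2 * Real.sqrt (∑ c, (g c) ^ 2)) * s := by ring
      exact le_of_mul_le_mul_right h1 hspos
  -- conclusion
  have hsqrtN : Real.sqrt N * Real.sqrt N = N := Real.mul_self_sqrt hNpos.le
  have hfin : Real.sqrt (∑ m, (f m) ^ 2) = Real.sqrt N := by rw [hfsq]
  have hgin : Real.sqrt (∑ c, (g c) ^ 2) = Real.sqrt N := by rw [hgsq]
  rw [hfin] at step1
  rw [hgin] at step2
  have hhnn : 0 ≤ Real.sqrt (∑ b, (h b) ^ 2) := Real.sqrt_nonneg _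
  have hNinv : N⁻¹ * N = 1 := inv_mul_cancel₀ hNpos.ne'
  calc r ≤ maxCorr P1 * (N⁻¹ * (Real.sqrt N * Real.sqrt (∑ b, (h b) ^ 2))) := step1
    _ ≤ maxCorr P1 * (N⁻¹ * (Real.sqrt N * (maxCorr P2 * Real.sqrt N))) := by
        have hsN : 0 ≤ Real.sqrt N := Real.sqrt_nonneg _
        have hNi : (0:ℝ) ≤ N⁻¹ := by positivity
        exact mul_le_mul_of_nonneg_left
          (mul_le_mul_of_nonneg_left (mul_le_mul_of_nonneg_left step2 hsN) hNi) hrho1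
    _ = maxCorr P1 * maxCorr P2 := by
        rw [show Real.sqrt N * (maxCorr P2 * Real.sqrt N)
            = maxCorr P2 * (Real.sqrt N * Real.sqrt N) by ring, hsqrtN]
        rw [show N⁻¹ * (maxCorr P2 * N) = maxCorr P2 * (N⁻¹ * N) by ring, hNinv]
        ring
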